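/- arXiv:1602.02063 — 2 statements merged into one kernel-verified Lean document; each statement's English description precedes it below -/
import Mathlib

section
/- Let T ≥ 1, m = n = T + ⌊T/2⌋, U = U_M, and let P be the m×n matrix with P i j = 1 if i = j ≤ T and P i j = 0 otherwise (Team 1 has T ordinary players, player i beating only opponent i, plus ⌊T/2⌋ dominated players with all-zero rows; Team 2 has ⌊T/2⌋ extra players who beat every opponent). Then V(G(T,P,U_M)) > −1; i.e., with ⌊T/2⌋ dominated players recruited, Team 1 has positive probability of winning at least ⌈T/2⌉ rounds under optimal play. -/
/-- Value function of the team competition `G(T,P,U)`, by backward induction.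
`gval m n P U r X Y w` is the value of the state where the players in `X` (Team 1)
and `Y` (Team 2) have already played, Team 1 has won `w` rounds so far, and
`r = T - |X|` rounds remain to be played.  The value of the whole game is
`gval m n P U T ∅ ∅ 0`. -/
noncomputable def gval (m n : ℕ) (P : Fin m → Fin n → ℝ) (U : ℕ → ℝ) :
    ℕ → Finset (Fin m) → Finset (Fin n) → ℕ → ℝ
  | 0, _, _, w => U w
  | r + 1, X, Y, w =>
      sSup {v : ℝ | ∃ p : Fin m → ℝ,
        (∀ i, 0 ≤ p i) ∧ (∀ i ∈ X, p i = 0) ∧ (∑ i, p i) = 1 ∧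
        v = sInf {u : ℝ | ∃ j, j ∉ Y ∧
          u = ∑ i, p i *
            (P i j * gval m n P U r (insert i X) (insert j Y) (w + 1) +
             (1 - P i j) * gval m n P U r (insert i X) (insert j Y) w)}}

/-- The utility function `U_M(t)`: `1` if `t > T/2`, `0` if `t = T/2`, `-1` if `t < T/2`. -/
def UM (T : ℕ) : ℕ → ℝ := fun t => if T < 2 * t then 1 else if 2 * t = T then 0 else -1

lemma myInf_bounds {S : Set ℝ} (h : ∀ u ∈ S, -1 ≤ u ∧ u ≤ 1) :
    -1 ≤ sInf S ∧ sInf S ≤ 1 := by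
  rcases S.eq_empty_or_nonempty with rfl | ⟨u, hu⟩
  · simp [Real.sInf_empty]
  · constructor
    · exact le_csInf ⟨u, hu⟩ fun x hx => (h x hx).1
    · exact le_trans (csInf_le ⟨-1, fun x hx => (h x hx).1⟩ hu) (h u hu).2

lemma mySup_bounds {S : Set ℝ} (h : ∀ u ∈ S, -1 ≤ u ∧ u ≤ 1) :
    -1 ≤ sSup S ∧ sSup S ≤ 1 := by
  rcases S.eq_empty_or_nonempty with rfl | ⟨u, hu⟩
  · simp [Real.sSup_empty]
  · constructor
    · exact le_trans (h u hu).1 (le_csSup ⟨1, fun x hx => (h x hx).2⟩ hu)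
    · exact csSup_le ⟨u, hu⟩ fun x hx => (h x hx).2

lemma combo_bounds {a x y : ℝ} (h0 : 0 ≤ a) (h1 : a ≤ 1)
    (hx : -1 ≤ x ∧ x ≤ 1) (hy : -1 ≤ y ∧ y ≤ 1) :
    -1 ≤ a * x + (1 - a) * y ∧ a * x + (1 - a) * y ≤ 1 := by
  obtain ⟨hx1, hx2⟩ := hx; obtain ⟨hy1, hy2⟩ := hy
  constructor <;> nlinarith

lemma sum_bounds {m : ℕ} (p c : Fin m → ℝ) (hp : ∀ i, 0 ≤ p i)
    (hs : ∑ i, p i = 1) (hc : ∀ i, -1 ≤ c i ∧ c i ≤ 1) :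
    -1 ≤ ∑ i, p i * c i ∧ ∑ i, p i * c i ≤ 1 := by
  constructor
  · have h1 : ∑ i, p i * (-1 : ℝ) ≤ ∑ i, p i * c i :=
      Finset.sum_le_sum fun i _ => mul_le_mul_of_nonneg_left (hc i).1 (hp i)
    have h2 : ∑ i, p i * (-1 : ℝ) = -1 := by rw [← Finset.sum_mul, hs]; ring
    linarith
  · have h1 : ∑ i, p i * c i ≤ ∑ i, p i * (1 : ℝ) :=
      Finset.sum_le_sum fun i _ => mul_le_mul_of_nonneg_left (hc i).2 (hp i)
    have h2 : ∑ i, p i * (1 : ℝ) = 1 := by rw [← Finset.sum_mul, hs]; ring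
    linarith

lemma key_sum {m : ℕ} (p c : Fin m → ℝ) (hp : ∀ i, 0 ≤ p i)
    (hs : ∑ i, p i = 1) (hc : ∀ i, -1 ≤ c i) (i0 : Fin m) (a b : ℝ)
    (ha0 : 0 ≤ a) (hb0 : 0 ≤ b) (hb : b ≤ p i0) (hkey : -1 + a ≤ c i0) :
    -1 + a * b ≤ ∑ i, p i * c i := by
  have h1 : ∑ i, p i * (c i + 1) = (∑ i, p i * c i) + 1 := by
    simp [mul_add, Finset.sum_add_distrib, hs]
  have h2 : a * b ≤ p i0 * (c i0 + 1) := by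
    rw [mul_comm]
    exact mul_le_mul hb (by linarith) ha0 (hp i0)
  have h3 : p i0 * (c i0 + 1) ≤ ∑ i, p i * (c i + 1) :=
    Finset.single_le_sum (f := fun i => p i * (c i + 1))
      (fun i _ => mul_nonneg (hp i) (by linarith [hc i])) (Finset.mem_univ i0)
  linarith

lemma gval_bounds (m n : ℕ) (P : Fin m → Fin n → ℝ)
    (hP : ∀ i j, 0 ≤ P i j ∧ P i j ≤ 1) (U : ℕ → ℝ)
    (hU : ∀ w, -1 ≤ U w ∧ U w ≤ 1) :
    ∀ r X Y w, -1 ≤ gval m n P U r X Y w ∧ gval m n P U r X Y w ≤ 1 := by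
  intro r
  induction r with
  | zero => intro X Y w; rw [gval]; exact hU w
  | succ r ih =>
    intro X Y w
    rw [gval]
    apply mySup_bounds
    rintro v ⟨p, hp0, -, hps, rfl⟩
    apply myInf_bounds
    rintro u ⟨j, -, rfl⟩
    exact sum_bounds p _ hp0 hps fun i =>
      combo_bounds (hP i j).1 (hP i j).2 (ih _ _ _) (ih _ _ _)

section main
variable (T : ℕ)

private abbrev MM : ℕ := T + T / 2
private noncomputable abbrev PP : Fin (MM T) → Fin (MM T) → ℝ :=
  fun i j => if (i : ℕ) = (j : ℕ) ∧ (i : ℕ) < T then (1 : ℝ) else 0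

lemma PP_bounds : ∀ i j, 0 ≤ PP T i j ∧ PP T i j ≤ 1 := by
  intro i j; unfold PP; split_ifs <;> norm_num

lemma UM_bounds : ∀ w, -1 ≤ UM T w ∧ UM T w ≤ 1 := by
  intro w; unfold UM; split_ifs <;> norm_num

lemma card_dominated (X : Finset (Fin (MM T))) :
    (X.filter fun i => ¬ i.val < T).card ≤ T / 2 := by
  classical
  have hsub : (X.filter fun i => ¬ i.val < T).image (fun i : Fin (MM T) => i.val)
      ⊆ Finset.Ico T (MM T) := by
    intro x hx
    simp only [Finset.mem_image, Finset.mem_filter] at hx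
    obtain ⟨i, ⟨-, hi⟩, rfl⟩ := hx
    exact Finset.mem_Ico.mpr ⟨Nat.le_of_not_lt hi, i.isLt⟩
  calc (X.filter fun i => ¬ i.val < T).card
      = ((X.filter fun i => ¬ i.val < T).image (fun i : Fin (MM T) => i.val)).card :=
        (Finset.card_image_of_injective _ Fin.val_injective).symm
    _ ≤ (Finset.Ico T (MM T)).card := Finset.card_le_card hsub
    _ = T / 2 := by
        rw [Nat.card_Ico]
        have hMM : MM T = T + T / 2 := rfl
        omega

lemma main_lemma (hT : 1 ≤ T) :
    ∀ r, r ≤ T → ∀ (X Y : Finset (Fin (MM T))) (w : ℕ),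
      X.card = T - r → Y.card = T - r →
      X.filter (fun i => i.val < T) = Y.filter (fun i => i.val < T) →
      w = (X.filter (fun i => i.val < T)).card →
      -1 + (1 / ((MM T : ℕ) : ℝ)) ^ r ≤ gval (MM T) (MM T) (PP T) (UM T) r X Y w := by
  intro r
  induction r with
  | zero =>
    intro _ X Y w hX hY hfil hw
    rw [gval, pow_zero]
    have hsplit := Finset.card_filter_add_card_filter_not
      (s := X) (fun i : Fin (MM T) => i.val < T)
    have hdom := card_dominated T X
    have hMM : MM T = T + T / 2 := rfl
    have hw2 : T ≤ 2 * w := by omega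
    unfold UM
    split_ifs with h1 h2
    · norm_num
    · norm_num
    · exfalso; omega
  | succ r ih =>
    intro hr X Y w hX hY hfil hw
    classical
    have hgb := gval_bounds (MM T) (MM T) (PP T) (PP_bounds T) (UM T) (UM_bounds T)
    have hMM : MM T = T + T / 2 := rfl
    have hm : 1 ≤ MM T := by unfold MM; omega
    have hXc : Xᶜ.card = MM T - (T - (r + 1)) := by
      rw [Finset.card_compl, Fintype.card_fin, hX]
    have hXcpos : 0 < Xᶜ.card := by omega
    have hXcle : Xᶜ.card ≤ MM T := by omega
    have hXcR : (0 : ℝ) < (Xᶜ.card : ℝ) := by exact_mod_cast hXcpos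
    have hmR : (0 : ℝ) < ((MM T : ℕ) : ℝ) := by exact_mod_cast hm
    set p : Fin (MM T) → ℝ := fun i => if i ∈ X then 0 else 1 / (Xᶜ.card : ℝ) with hp_def
    have hp0 : ∀ i, 0 ≤ p i := by
      intro i; rw [hp_def]; dsimp only; split_ifs
      · exact le_refl 0
      · positivity
    have hzero : ∀ i ∈ X, p i = 0 := by
      intro i hi; rw [hp_def]; dsimp only; rw [if_pos hi]
    have hpsum : ∑ i, p i = 1 := by
      rw [hp_def]
      rw [Finset.sum_ite, Finset.sum_const_zero, zero_add, Finset.sum_const]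
      have huniv : Finset.univ.filter (fun i : Fin (MM T) => ¬ i ∈ X) = Xᶜ := by
        ext i; simp
      rw [huniv, nsmul_eq_mul, mul_one_div, div_self (ne_of_gt hXcR)]
    rw [gval]
    have hbdd : BddAbove {v : ℝ | ∃ p : Fin (MM T) → ℝ,
        (∀ i, 0 ≤ p i) ∧ (∀ i ∈ X, p i = 0) ∧ (∑ i, p i) = 1 ∧
        v = sInf {u : ℝ | ∃ j, j ∉ Y ∧
          u = ∑ i, p i *
            (PP T i j * gval (MM T) (MM T) (PP T) (UM T) r (insert i X) (insert j Y) (w + 1) +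
             (1 - PP T i j) * gval (MM T) (MM T) (PP T) (UM T) r (insert i X) (insert j Y) w)}} := by
      refine ⟨1, ?_⟩
      rintro v ⟨q, hq0, -, hqs, rfl⟩
      refine (myInf_bounds ?_).2
      rintro u ⟨j, -, rfl⟩
      exact sum_bounds q _ hq0 hqs fun i =>
        combo_bounds (PP_bounds T i j).1 (PP_bounds T i j).2 (hgb r _ _ _) (hgb r _ _ _)
    refine le_trans ?_ (le_csSup hbdd ⟨p, hp0, hzero, hpsum, rfl⟩)
    -- lower bound on the inf
    have hYne : 0 < Yᶜ.card := by
      rw [Finset.card_compl, Fintype.card_fin, hY]; omega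
    obtain ⟨j0, hj0⟩ := Finset.card_pos.mp hYne
    have hj0Y : j0 ∉ Y := Finset.mem_compl.mp hj0
    apply le_csInf
    · exact ⟨_, j0, hj0Y, rfl⟩
    rintro u ⟨j, hjY, rfl⟩
    -- find the designated player i0
    have hstep : ∃ i0 : Fin (MM T), i0 ∉ X ∧
        -1 + (1 / ((MM T : ℕ) : ℝ)) ^ r ≤
          PP T i0 j * gval (MM T) (MM T) (PP T) (UM T) r (insert i0 X) (insert j Y) (w + 1) +
          (1 - PP T i0 j) * gval (MM T) (MM T) (PP T) (UM T) r (insert i0 X) (insert j Y) w := by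
      by_cases hjT : j.val < T
      · -- i0 = j, Team 1 wins this round
        have hjX : j ∉ X := by
          intro h
          have hmem : j ∈ X.filter (fun i => i.val < T) := Finset.mem_filter.mpr ⟨h, hjT⟩
          rw [hfil] at hmem
          exact hjY (Finset.mem_filter.mp hmem).1
        refine ⟨j, hjX, ?_⟩
        have hPjj : PP T j j = 1 := if_pos ⟨rfl, hjT⟩
        rw [hPjj]
        have hih := ih (by omega) (insert j X) (insert j Y) (w + 1)
          (by rw [Finset.card_insert_of_notMem hjX, hX]; omega)
          (by rw [Finset.card_insert_of_notMem hjY, hY]; omega)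
          (by rw [Finset.filter_insert, Finset.filter_insert, if_pos hjT, if_pos hjT, hfil])
          (by
            rw [Finset.filter_insert, if_pos hjT,
              Finset.card_insert_of_notMem (fun h => hjX (Finset.mem_filter.mp h).1), ← hw])
        linarith
      · -- i0 = an unused dominated player
        have hsX := Finset.card_filter_add_card_filter_not
          (s := X) (fun i : Fin (MM T) => i.val < T)
        have hsY := Finset.card_filter_add_card_filter_not
          (s := Y) (fun i : Fin (MM T) => i.val < T)
        have hposeq : (X.filter fun i => i.val < T).card = (Y.filter fun i => i.val < T).card := by
          rw [hfil]
        have hjdom : j ∈ Finset.univ.filter (fun i : Fin (MM T) => ¬ i.val < T) :=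
          Finset.mem_filter.mpr ⟨Finset.mem_univ j, hjT⟩
        have hins : insert j (Y.filter fun i => ¬ i.val < T) ⊆
            Finset.univ.filter (fun i : Fin (MM T) => ¬ i.val < T) := by
          intro x hx
          rcases Finset.mem_insert.mp hx with rfl | hx
          · exact hjdom
          · exact Finset.mem_filter.mpr ⟨Finset.mem_univ x, (Finset.mem_filter.mp hx).2⟩
        have hcardY : (Y.filter fun i => ¬ i.val < T).card + 1 ≤
            (Finset.univ.filter (fun i : Fin (MM T) => ¬ i.val < T)).card := by
          have h1 : (insert j (Y.filter fun i => ¬ i.val < T)).card =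
              (Y.filter fun i => ¬ i.val < T).card + 1 :=
            Finset.card_insert_of_notMem (fun h => hjY (Finset.mem_filter.mp h).1)
          have h2 := Finset.card_le_card hins
          omega
        have hXlt : (X.filter fun i => ¬ i.val < T).card <
            (Finset.univ.filter (fun i : Fin (MM T) => ¬ i.val < T)).card := by omega
        have hnot : ¬ (Finset.univ.filter (fun i : Fin (MM T) => ¬ i.val < T)) ⊆
            (X.filter fun i => ¬ i.val < T) := fun h =>
          absurd (Finset.card_le_card h) (not_le.mpr hXlt)
        obtain ⟨i0, hi0mem, hi0not⟩ := Finset.not_subset.mp hnot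
        have hi0T : ¬ i0.val < T := (Finset.mem_filter.mp hi0mem).2
        have hi0X : i0 ∉ X := fun h => hi0not (Finset.mem_filter.mpr ⟨h, hi0T⟩)
        refine ⟨i0, hi0X, ?_⟩
        have hP0 : PP T i0 j = 0 := if_neg (fun h => hi0T h.2)
        rw [hP0]
        have hih := ih (by omega) (insert i0 X) (insert j Y) w
          (by rw [Finset.card_insert_of_notMem hi0X, hX]; omega)
          (by rw [Finset.card_insert_of_notMem hjY, hY]; omega)
          (by rw [Finset.filter_insert, Finset.filter_insert, if_neg hi0T, if_neg hjT, hfil])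
          (by rw [Finset.filter_insert, if_neg hi0T, ← hw])
        linarith
    obtain ⟨i0, hi0X, hkey⟩ := hstep
    rw [pow_succ]
    refine key_sum p
      (fun i => PP T i j * gval (MM T) (MM T) (PP T) (UM T) r (insert i X) (insert j Y) (w + 1) +
        (1 - PP T i j) * gval (MM T) (MM T) (PP T) (UM T) r (insert i X) (insert j Y) w)
      hp0 hpsum
      (fun i => (combo_bounds (PP_bounds T i j).1 (PP_bounds T i j).2
        (hgb r _ _ _) (hgb r _ _ _)).1)
      i0 ((1 / ((MM T : ℕ) : ℝ)) ^ r) (1 / ((MM T : ℕ) : ℝ))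
      (by positivity) (by positivity) ?_ hkey
    -- 1/m ≤ p i0
    have hpi0 : p i0 = 1 / (Xᶜ.card : ℝ) := by
      rw [hp_def]; dsimp only; rw [if_neg hi0X]
    rw [hpi0]
    exact one_div_le_one_div_of_le hXcR (by exact_mod_cast hXcle)

end main


/-- Let `T ≥ 1`, `m = n = T + ⌊T/2⌋`, `U = U_M`, and let
`P i j = 1` iff `i = j ≤ T` (Team 1 has `T` ordinary players plus `⌊T/2⌋` dominated
ones; Team 2 has `⌊T/2⌋` extra invincible players).  Then the value is `> -1`: with
`⌊T/2⌋` dominated players recruited, Team 1 has positive probability of winning at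
least `⌈T/2⌉` rounds under optimal play. -/
theorem enough_dominated_players_help_UM (T : ℕ) (hT : 1 ≤ T) :
    gval (T + T / 2) (T + T / 2)
      (fun i j => if (i : ℕ) = (j : ℕ) ∧ (i : ℕ) < T then (1 : ℝ) else 0)
      (UM T) T ∅ ∅ 0 > -1 := by
  have hm : 1 ≤ MM T := by unfold MM; omega
  have hmR : (0 : ℝ) < ((MM T : ℕ) : ℝ) := by exact_mod_cast hm
  have h := main_lemma T hT T le_rfl ∅ ∅ 0 (by simp) (by simp) rfl (by simp)
  have hpos : (0 : ℝ) < (1 / ((MM T : ℕ) : ℝ)) ^ T := by positivity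
  have : (-1 : ℝ) < gval (MM T) (MM T) (PP T) (UM T) T ∅ ∅ 0 := by linarith
  exact this
end

section
/- Let U = U_E (so U_E(t) = t − T/2) and let P be an m×n matrix with entries in [0,1], m ≥ T ≥ 1, n ≥ T, such that at least T−1 of the rows of P are identically zero. Let P' be the (m+1)×n matrix obtained from P by appending one additional all-zero row. Then V(G(T,P',U_E)) = V(G(T,P,U_E)); i.e., under U_E, recruiting a T-th dominated player gives no advantage over T−1 dominated players. -/
noncomputable def Bv (m n : ℕ) (P : Fin m → Fin n → ℝ) (U : ℕ → ℝ) (r : ℕ)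
    (X : Finset (Fin m)) (Y : Finset (Fin n)) (w : ℕ) (p : Fin m → ℝ) (j : Fin n) : ℝ :=
  ∑ i, p i *
    (P i j * gval m n P U r (insert i X) (insert j Y) (w + 1) +
     (1 - P i j) * gval m n P U r (insert i X) (insert j Y) w)

theorem gval_succ (m n : ℕ) (P : Fin m → Fin n → ℝ) (U : ℕ → ℝ) (r : ℕ)
    (X : Finset (Fin m)) (Y : Finset (Fin n)) (w : ℕ) :
    gval m n P U (r+1) X Y w =
      sSup {v : ℝ | ∃ p : Fin m → ℝ,
        (∀ i, 0 ≤ p i) ∧ (∀ i ∈ X, p i = 0) ∧ (∑ i, p i) = 1 ∧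
        v = sInf {u : ℝ | ∃ j, j ∉ Y ∧ u = Bv m n P U r X Y w p j}} := rfl

lemma sInf_mem_Icc' {s : Set ℝ} {a b : ℝ} (hne : s.Nonempty) (hsub : s ⊆ Set.Icc a b) :
    sInf s ∈ Set.Icc a b := by
  obtain ⟨x, hx⟩ := hne
  constructor
  · exact le_csInf ⟨x, hx⟩ fun y hy => (hsub hy).1
  · exact le_trans (csInf_le ⟨a, fun y hy => (hsub hy).1⟩ hx) (hsub hx).2

lemma sSup_mem_Icc' {s : Set ℝ} {a b : ℝ} (hne : s.Nonempty) (hsub : s ⊆ Set.Icc a b) :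
    sSup s ∈ Set.Icc a b := by
  obtain ⟨x, hx⟩ := hne
  constructor
  · exact le_trans (hsub hx).1 (le_csSup ⟨b, fun y hy => (hsub hy).2⟩ hx)
  · exact csSup_le ⟨x, hx⟩ fun y hy => (hsub hy).2

lemma bddBelow_image_add_one {s : Set ℝ} (hb : BddBelow s) :
    BddBelow ((fun x => x + 1) '' s) := by
  obtain ⟨b, hb⟩ := hb
  refine ⟨b + 1, ?_⟩
  rintro z ⟨u, hu, rfl⟩
  have := hb hu
  dsimp only
  linarith

lemma bddAbove_image_add_one {s : Set ℝ} (hb : BddAbove s) :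
    BddAbove ((fun x => x + 1) '' s) := by
  obtain ⟨b, hb⟩ := hb
  refine ⟨b + 1, ?_⟩
  rintro z ⟨u, hu, rfl⟩
  have := hb hu
  dsimp only
  linarith

lemma sInf_add_one {s : Set ℝ} (hne : s.Nonempty) (hb : BddBelow s) :
    sInf ((fun x => x + 1) '' s) = sInf s + 1 := by
  apply le_antisymm
  · have h1 : ∀ y ∈ s, sInf ((fun x => x + 1) '' s) - 1 ≤ y := by
      intro y hy
      have : sInf ((fun x => x + 1) '' s) ≤ y + 1 :=
        csInf_le (bddBelow_image_add_one hb) ⟨y, hy, rfl⟩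
      linarith
    have := le_csInf hne h1
    linarith
  · apply le_csInf (hne.image _)
    rintro y ⟨u, hu, rfl⟩
    have := csInf_le hb hu
    dsimp only
    linarith

lemma sSup_add_one {s : Set ℝ} (hne : s.Nonempty) (hb : BddAbove s) :
    sSup ((fun x => x + 1) '' s) = sSup s + 1 := by
  apply le_antisymm
  · apply csSup_le (hne.image _)
    rintro y ⟨u, hu, rfl⟩
    have := le_csSup hb hu
    dsimp only
    linarith
  · have h1 : ∀ y ∈ s, y ≤ sSup ((fun x => x + 1) '' s) - 1 := by
      intro y hy
      have : y + 1 ≤ sSup ((fun x => x + 1) '' s) :=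
        le_csSup (bddAbove_image_add_one hb) ⟨y, hy, rfl⟩
      linarith
    have := csSup_le hne h1
    linarith

lemma exists_notMem_fin {k : ℕ} {Z : Finset (Fin k)} (h : Z.card < k) : ∃ j, j ∉ Z := by
  by_contra hc
  push_neg at hc
  have : Z = Finset.univ := Finset.eq_univ_iff_forall.2 hc
  simp [this, Finset.card_univ] at h

lemma exists_valid {k : ℕ} {X : Finset (Fin k)} (h : X.card < k) :
    ∃ p : Fin k → ℝ, (∀ i, 0 ≤ p i) ∧ (∀ i ∈ X, p i = 0) ∧ (∑ i, p i) = 1 := by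
  obtain ⟨i₀, hi₀⟩ := exists_notMem_fin h
  refine ⟨fun i => if i = i₀ then 1 else 0, fun i => by positivity, fun i hi => ?_, by simp⟩
  simp only [ite_eq_right_iff]
  intro hii; exact absurd (hii ▸ hi) hi₀


/-- The utility function `U_E(t) = t - T/2`. -/
noncomputable def UE (T : ℕ) : ℕ → ℝ := fun t => (t : ℝ) - (T : ℝ) / 2

section
variable {T m n : ℕ} {P : Fin m → Fin n → ℝ}

lemma Bv_bound_aux (hP : ∀ i j, P i j ∈ Set.Icc (0 : ℝ) 1) {r : ℕ}
    (hg : ∀ (X : Finset (Fin m)) (Y : Finset (Fin n)) (w : ℕ), X.card + r ≤ m → Y.card + r ≤ n →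
      gval m n P (UE T) r X Y w ∈ Set.Icc ((w : ℝ) - T / 2) ((w : ℝ) + r - T / 2))
    {X : Finset (Fin m)} {Y : Finset (Fin n)} {w : ℕ} {p : Fin m → ℝ} {j : Fin n}
    (hpos : ∀ i, 0 ≤ p i) (hsum : (∑ i, p i) = 1)
    (hX : X.card + 1 + r ≤ m) (hY : Y.card + 1 + r ≤ n) :
    Bv m n P (UE T) r X Y w p j ∈
      Set.Icc ((w : ℝ) - T / 2) ((w : ℝ) + 1 + r - T / 2) := by
  have hterm : ∀ i : Fin m,
      P i j * gval m n P (UE T) r (insert i X) (insert j Y) (w + 1) +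
        (1 - P i j) * gval m n P (UE T) r (insert i X) (insert j Y) w ∈
      Set.Icc ((w : ℝ) - T / 2) ((w : ℝ) + 1 + r - T / 2) := by
    intro i
    have hXi : (insert i X).card + r ≤ m :=
      le_trans (by have := Finset.card_insert_le i X; omega) hX
    have hYj : (insert j Y).card + r ≤ n :=
      le_trans (by have := Finset.card_insert_le j Y; omega) hY
    have h1 := hg (insert i X) (insert j Y) (w + 1) hXi hYj
    have h0 := hg (insert i X) (insert j Y) w hXi hYj
    obtain ⟨hp0, hp1⟩ := hP i j
    simp only [Set.mem_Icc] at h1 h0 ⊢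
    push_cast at h1 h0 ⊢
    constructor <;> nlinarith [h1.1, h1.2, h0.1, h0.2]
  constructor
  · calc ((w : ℝ) - T / 2) = ∑ i, p i * ((w : ℝ) - T / 2) := by
          rw [← Finset.sum_mul, hsum, one_mul]
      _ ≤ _ := Finset.sum_le_sum fun i _ =>
          mul_le_mul_of_nonneg_left (hterm i).1 (hpos i)
  · calc Bv m n P (UE T) r X Y w p j
        ≤ ∑ i, p i * ((w : ℝ) + 1 + r - T / 2) := Finset.sum_le_sum fun i _ =>
          mul_le_mul_of_nonneg_left (hterm i).2 (hpos i)
      _ = _ := by rw [← Finset.sum_mul, hsum, one_mul]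

lemma gval_bound (hP : ∀ i j, P i j ∈ Set.Icc (0 : ℝ) 1) :
    ∀ (r : ℕ) (X : Finset (Fin m)) (Y : Finset (Fin n)) (w : ℕ),
      X.card + r ≤ m → Y.card + r ≤ n →
      gval m n P (UE T) r X Y w ∈ Set.Icc ((w : ℝ) - T / 2) ((w : ℝ) + r - T / 2) := by
  intro r
  induction r with
  | zero => intro X Y w _ _; simp [gval, UE]
  | succ r ih =>
    intro X Y w hX hY
    rw [gval_succ]
    have hXm : X.card < m := by omega
    have hYn : Y.card < n := by omega
    have hcast : ((w : ℝ) + ((r : ℕ) + 1 : ℕ) - T / 2) = (w : ℝ) + 1 + r - T / 2 := by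
      push_cast; ring
    rw [hcast]
    have hset : {v : ℝ | ∃ p : Fin m → ℝ,
        (∀ i, 0 ≤ p i) ∧ (∀ i ∈ X, p i = 0) ∧ (∑ i, p i) = 1 ∧
        v = sInf {u : ℝ | ∃ j, j ∉ Y ∧ u = Bv m n P (UE T) r X Y w p j}} ⊆
        Set.Icc ((w : ℝ) - T / 2) ((w : ℝ) + 1 + r - T / 2) := by
      rintro v ⟨p, hpos, hz, hsum, rfl⟩
      have hsub : {u : ℝ | ∃ j, j ∉ Y ∧ u = Bv m n P (UE T) r X Y w p j} ⊆
          Set.Icc ((w : ℝ) - T / 2) ((w : ℝ) + 1 + r - T / 2) := by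
        rintro u ⟨j, hj, rfl⟩
        exact Bv_bound_aux hP ih hpos hsum (by omega) (by omega)
      obtain ⟨j₀, hj₀⟩ := exists_notMem_fin hYn
      exact sInf_mem_Icc' ⟨_, ⟨j₀, hj₀, rfl⟩⟩ hsub
    obtain ⟨p₀, hp₀⟩ := exists_valid hXm
    exact sSup_mem_Icc' ⟨_, ⟨p₀, hp₀.1, hp₀.2.1, hp₀.2.2, rfl⟩⟩ hset

lemma Bv_bound' (hP : ∀ i j, P i j ∈ Set.Icc (0 : ℝ) 1) {r : ℕ}
    {X : Finset (Fin m)} {Y : Finset (Fin n)} {w : ℕ} {p : Fin m → ℝ} {j : Fin n}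
    (hpos : ∀ i, 0 ≤ p i) (hsum : (∑ i, p i) = 1)
    (hX : X.card + 1 + r ≤ m) (hY : Y.card + 1 + r ≤ n) :
    Bv m n P (UE T) r X Y w p j ∈
      Set.Icc ((w : ℝ) - T / 2) ((w : ℝ) + 1 + r - T / 2) :=
  Bv_bound_aux hP (fun X Y w => gval_bound hP r X Y w) hpos hsum hX hY

lemma uset_subset (hP : ∀ i j, P i j ∈ Set.Icc (0 : ℝ) 1) {r : ℕ}
    {X : Finset (Fin m)} {Y : Finset (Fin n)} {w : ℕ} {p : Fin m → ℝ}
    (hpos : ∀ i, 0 ≤ p i) (hsum : (∑ i, p i) = 1)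
    (hX : X.card + 1 + r ≤ m) (hY : Y.card + 1 + r ≤ n) :
    {u : ℝ | ∃ j, j ∉ Y ∧ u = Bv m n P (UE T) r X Y w p j} ⊆
      Set.Icc ((w : ℝ) - T / 2) ((w : ℝ) + 1 + r - T / 2) := by
  rintro u ⟨j, hj, rfl⟩
  exact Bv_bound' hP hpos hsum hX hY

lemma uset_nonempty {r : ℕ} {X : Finset (Fin m)} {Y : Finset (Fin n)} {w : ℕ}
    {p : Fin m → ℝ} (hY : Y.card < n) :
    {u : ℝ | ∃ j, j ∉ Y ∧ u = Bv m n P (UE T) r X Y w p j}.Nonempty := by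
  obtain ⟨j₀, hj₀⟩ := exists_notMem_fin hY
  exact ⟨_, ⟨j₀, hj₀, rfl⟩⟩

lemma vset_subset (hP : ∀ i j, P i j ∈ Set.Icc (0 : ℝ) 1) {r : ℕ}
    {X : Finset (Fin m)} {Y : Finset (Fin n)} {w : ℕ}
    (hX : X.card + 1 + r ≤ m) (hY : Y.card + 1 + r ≤ n) :
    {v : ℝ | ∃ p : Fin m → ℝ,
        (∀ i, 0 ≤ p i) ∧ (∀ i ∈ X, p i = 0) ∧ (∑ i, p i) = 1 ∧
        v = sInf {u : ℝ | ∃ j, j ∉ Y ∧ u = Bv m n P (UE T) r X Y w p j}} ⊆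
      Set.Icc ((w : ℝ) - T / 2) ((w : ℝ) + 1 + r - T / 2) := by
  rintro v ⟨p, hpos, hz, hsum, rfl⟩
  exact sInf_mem_Icc' (uset_nonempty (by omega)) (uset_subset hP hpos hsum hX hY)

lemma vset_nonempty {r : ℕ} {X : Finset (Fin m)} {Y : Finset (Fin n)} {w : ℕ}
    (hX : X.card < m) :
    {v : ℝ | ∃ p : Fin m → ℝ,
        (∀ i, 0 ≤ p i) ∧ (∀ i ∈ X, p i = 0) ∧ (∑ i, p i) = 1 ∧
        v = sInf {u : ℝ | ∃ j, j ∉ Y ∧ u = Bv m n P (UE T) r X Y w p j}}.Nonempty := by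
  obtain ⟨p₀, hp₀⟩ := exists_valid hX
  exact ⟨_, ⟨p₀, hp₀.1, hp₀.2.1, hp₀.2.2, rfl⟩⟩

lemma gval_shift (hP : ∀ i j, P i j ∈ Set.Icc (0 : ℝ) 1) :
    ∀ (r : ℕ) (X : Finset (Fin m)) (Y : Finset (Fin n)) (w : ℕ),
      X.card + r ≤ m → Y.card + r ≤ n →
      gval m n P (UE T) r X Y (w + 1) = gval m n P (UE T) r X Y w + 1 := by
  intro r
  induction r with
  | zero =>
    intro X Y w _ _
    show UE T (w + 1) = UE T w + 1
    simp only [UE]; push_cast; ring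
  | succ r ih =>
    intro X Y w hX hY
    rw [gval_succ, gval_succ]
    have hBv : ∀ (p : Fin m → ℝ), (∑ i, p i) = 1 → ∀ j : Fin n,
        Bv m n P (UE T) r X Y (w + 1) p j = Bv m n P (UE T) r X Y w p j + 1 := by
      intro p hsum j
      unfold Bv
      have hterm : ∀ i : Fin m,
          P i j * gval m n P (UE T) r (insert i X) (insert j Y) (w + 1 + 1) +
            (1 - P i j) * gval m n P (UE T) r (insert i X) (insert j Y) (w + 1) =
          (P i j * gval m n P (UE T) r (insert i X) (insert j Y) (w + 1) +
            (1 - P i j) * gval m n P (UE T) r (insert i X) (insert j Y) w) + 1 := by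
        intro i
        have hXi : (insert i X).card + r ≤ m := by
          have := Finset.card_insert_le i X; omega
        have hYj : (insert j Y).card + r ≤ n := by
          have := Finset.card_insert_le j Y; omega
        rw [ih (insert i X) (insert j Y) (w + 1) hXi hYj,
          ih (insert i X) (insert j Y) w hXi hYj]
        ring
      calc (∑ i, p i *
            (P i j * gval m n P (UE T) r (insert i X) (insert j Y) (w + 1 + 1) +
             (1 - P i j) * gval m n P (UE T) r (insert i X) (insert j Y) (w + 1)))
          = ∑ i, (p i *
            (P i j * gval m n P (UE T) r (insert i X) (insert j Y) (w + 1) +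
             (1 - P i j) * gval m n P (UE T) r (insert i X) (insert j Y) w) + p i) := by
            refine Finset.sum_congr rfl fun i _ => ?_
            rw [hterm i]; ring
        _ = _ := by rw [Finset.sum_add_distrib, hsum]
    have husetEq : ∀ (p : Fin m → ℝ), (∑ i, p i) = 1 →
        {u : ℝ | ∃ j, j ∉ Y ∧ u = Bv m n P (UE T) r X Y (w + 1) p j} =
          (fun x => x + 1) '' {u : ℝ | ∃ j, j ∉ Y ∧ u = Bv m n P (UE T) r X Y w p j} := by
      intro p hsum
      ext u
      constructor
      · rintro ⟨j, hj, rfl⟩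
        exact ⟨Bv m n P (UE T) r X Y w p j, ⟨j, hj, rfl⟩, (hBv p hsum j).symm⟩
      · rintro ⟨x, ⟨j, hj, rfl⟩, rfl⟩
        exact ⟨j, hj, (hBv p hsum j).symm⟩
    have hvEq : {v : ℝ | ∃ p : Fin m → ℝ,
          (∀ i, 0 ≤ p i) ∧ (∀ i ∈ X, p i = 0) ∧ (∑ i, p i) = 1 ∧
          v = sInf {u : ℝ | ∃ j, j ∉ Y ∧ u = Bv m n P (UE T) r X Y (w + 1) p j}} =
        (fun x => x + 1) '' {v : ℝ | ∃ p : Fin m → ℝ,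
          (∀ i, 0 ≤ p i) ∧ (∀ i ∈ X, p i = 0) ∧ (∑ i, p i) = 1 ∧
          v = sInf {u : ℝ | ∃ j, j ∉ Y ∧ u = Bv m n P (UE T) r X Y w p j}} := by
      ext v
      constructor
      · rintro ⟨p, h1, h2, h3, rfl⟩
        refine ⟨sInf {u : ℝ | ∃ j, j ∉ Y ∧ u = Bv m n P (UE T) r X Y w p j},
          ⟨p, h1, h2, h3, rfl⟩, ?_⟩
        rw [husetEq p h3, sInf_add_one (uset_nonempty (by omega))
          (BddBelow.mono (uset_subset hP (r := r) (X := X) (Y := Y) (w := w)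
            h1 h3 (by omega) (by omega)) bddBelow_Icc)]
      · rintro ⟨x, ⟨p, h1, h2, h3, rfl⟩, rfl⟩
        refine ⟨p, h1, h2, h3, ?_⟩
        rw [husetEq p h3, sInf_add_one (uset_nonempty (by omega))
          (BddBelow.mono (uset_subset hP (r := r) (X := X) (Y := Y) (w := w)
            h1 h3 (by omega) (by omega)) bddBelow_Icc)]
    rw [hvEq, sSup_add_one (vset_nonempty (by omega))
      (BddAbove.mono (vset_subset hP (r := r) (X := X) (Y := Y) (w := w)
        (by omega) (by omega)) bddAbove_Icc)]

lemma snoc_mem_Icc (hP : ∀ i j, P i j ∈ Set.Icc (0 : ℝ) 1) :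
    ∀ (i : Fin (m + 1)) (j : Fin n),
      (Fin.snoc P (fun _ => (0 : ℝ)) : Fin (m+1) → Fin n → ℝ) i j ∈ Set.Icc (0 : ℝ) 1 := by
  intro i j
  induction i using Fin.lastCases with
  | last => simp [Fin.snoc_last]
  | cast i => simpa [Fin.snoc_castSucc] using hP i j

lemma gval_embed (hP : ∀ i j, P i j ∈ Set.Icc (0 : ℝ) 1) :
    ∀ (r : ℕ) (X : Finset (Fin m)) (Y : Finset (Fin n)) (w : ℕ),
      X.card + r ≤ m → Y.card + r ≤ n →
      gval m n P (UE T) r X Y w ≤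
        gval (m + 1) n (Fin.snoc P (fun _ => (0 : ℝ))) (UE T) r
          (X.map Fin.castSuccEmb) Y w := by
  set P' : Fin (m + 1) → Fin n → ℝ := Fin.snoc P (fun _ => (0 : ℝ)) with hP'def
  have hP' := snoc_mem_Icc hP
  intro r
  induction r with
  | zero => intro X Y w _ _; exact le_of_eq rfl
  | succ r ih =>
    intro X Y w hX hY
    rw [gval_succ, gval_succ]
    apply csSup_le (vset_nonempty (by omega))
    rintro v ⟨p, h1, h2, h3, rfl⟩
    set p' : Fin (m + 1) → ℝ := Fin.snoc p 0 with hp'def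
    have hp'pos : ∀ i, 0 ≤ p' i := by
      intro i
      induction i using Fin.lastCases with
      | last => simp [hp'def, Fin.snoc_last]
      | cast i => simpa [hp'def, Fin.snoc_castSucc] using h1 i
    have hp'zero : ∀ i ∈ X.map Fin.castSuccEmb, p' i = 0 := by
      intro i hi
      obtain ⟨i₀, hi₀, rfl⟩ := Finset.mem_map.1 hi
      have : p' (Fin.castSucc i₀) = 0 := by
        rw [hp'def]; rw [Fin.snoc_castSucc]; exact h2 i₀ hi₀
      exact this
    have hp'sum : (∑ i, p' i) = 1 := by
      rw [Fin.sum_univ_castSucc]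
      simp [hp'def, Fin.snoc_castSucc, Fin.snoc_last, h3]
    have key : ∀ j, Bv m n P (UE T) r X Y w p j ≤
        Bv (m + 1) n P' (UE T) r (X.map Fin.castSuccEmb) Y w p' j := by
      intro j
      unfold Bv
      rw [Fin.sum_univ_castSucc]
      have hlast : p' (Fin.last m) = 0 := by simp [hp'def, Fin.snoc_last]
      rw [hlast, zero_mul, add_zero]
      apply Finset.sum_le_sum
      intro i _
      have hmapins : insert (Fin.castSucc i) (X.map Fin.castSuccEmb) =
          (insert i X).map Fin.castSuccEmb := (Finset.map_insert _ _ _).symm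
      have hpc : p' (Fin.castSucc i) = p i := by simp [hp'def, Fin.snoc_castSucc]
      have hPc : P' (Fin.castSucc i) j = P i j := by simp [hP'def, Fin.snoc_castSucc]
      rw [hpc, hPc, hmapins]
      have hXi : (insert i X).card + r ≤ m := by
        have := Finset.card_insert_le i X; omega
      have hYj : (insert j Y).card + r ≤ n := by
        have := Finset.card_insert_le j Y; omega
      have ihw1 := ih (insert i X) (insert j Y) (w + 1) hXi hYj
      have ihw := ih (insert i X) (insert j Y) w hXi hYj
      obtain ⟨hq0, hq1⟩ := hP i j
      refine mul_le_mul_of_nonneg_left ?_ (h1 i)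
      exact add_le_add (mul_le_mul_of_nonneg_left ihw1 hq0)
        (mul_le_mul_of_nonneg_left ihw (by linarith))
    have hstep1 : sInf {u : ℝ | ∃ j, j ∉ Y ∧ u = Bv m n P (UE T) r X Y w p j} ≤
        sInf {u : ℝ | ∃ j, j ∉ Y ∧ u = Bv (m + 1) n P' (UE T) r
          (X.map Fin.castSuccEmb) Y w p' j} := by
      apply le_csInf (uset_nonempty (by omega))
      rintro b ⟨j, hj, rfl⟩
      refine le_trans (csInf_le (BddBelow.mono
        (uset_subset hP (r := r) (X := X) (Y := Y) (w := w) h1 h3 (by omega) (by omega))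
        bddBelow_Icc) ⟨j, hj, rfl⟩) (key j)
    refine le_trans hstep1 (le_csSup (BddAbove.mono
      (vset_subset hP' (r := r) (X := X.map Fin.castSuccEmb) (Y := Y) (w := w)
        (by simp only [Finset.card_map]; omega) (by omega)) bddAbove_Icc)
      ⟨p', hp'pos, hp'zero, hp'sum, rfl⟩)

/-- Coupling relation between states of the two games. -/
def RelC (S X : Finset (Fin m)) (X' : Finset (Fin (m + 1))) : Prop :=
  X' = X.map Fin.castSuccEmb ∨
    ∃ s, s ∈ X ∧ s ∈ S ∧ X' = insert (Fin.last m) ((X.erase s).map Fin.castSuccEmb)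

lemma last_not_mem_map {X : Finset (Fin m)} : Fin.last m ∉ X.map Fin.castSuccEmb := by
  intro h
  obtain ⟨i, _, hi⟩ := Finset.mem_map.1 h
  exact absurd hi (Fin.ne_of_lt (Fin.castSucc_lt_last i))

lemma relC_card {S X : Finset (Fin m)} {X' : Finset (Fin (m + 1))} (h : RelC S X X') :
    X'.card = X.card := by
  rcases h with h | ⟨s, hs, _, h⟩
  · rw [h, Finset.card_map]
  · rw [h, Finset.card_insert_of_notMem last_not_mem_map, Finset.card_map,
      Finset.card_erase_of_mem hs]
    have : 1 ≤ X.card := Finset.card_pos.2 ⟨s, hs⟩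
    omega

lemma le_sSup_tail {m' : ℕ} {Q : Fin m' → Fin n → ℝ}
    (hQ : ∀ i j, Q i j ∈ Set.Icc (0 : ℝ) 1) (hP : ∀ i j, P i j ∈ Set.Icc (0 : ℝ) 1)
    {r : ℕ} {X : Finset (Fin m)} {X' : Finset (Fin m')} {Y : Finset (Fin n)} {w : ℕ}
    {p : Fin m → ℝ} {p' : Fin m' → ℝ}
    (h1' : ∀ i, 0 ≤ p' i) (h3' : (∑ i, p' i) = 1)
    (h1 : ∀ i, 0 ≤ p i) (h2 : ∀ i ∈ X, p i = 0) (h3 : (∑ i, p i) = 1)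
    (hX' : X'.card + 1 + r ≤ m') (hX : X.card + 1 + r ≤ m) (hY : Y.card + 1 + r ≤ n)
    (key : ∀ j, Bv m' n Q (UE T) r X' Y w p' j ≤ Bv m n P (UE T) r X Y w p j) :
    sInf {u : ℝ | ∃ j, j ∉ Y ∧ u = Bv m' n Q (UE T) r X' Y w p' j} ≤
      sSup {v : ℝ | ∃ q : Fin m → ℝ,
        (∀ i, 0 ≤ q i) ∧ (∀ i ∈ X, q i = 0) ∧ (∑ i, q i) = 1 ∧
        v = sInf {u : ℝ | ∃ j, j ∉ Y ∧ u = Bv m n P (UE T) r X Y w q j}} := by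
  have hstep : sInf {u : ℝ | ∃ j, j ∉ Y ∧ u = Bv m' n Q (UE T) r X' Y w p' j} ≤
      sInf {u : ℝ | ∃ j, j ∉ Y ∧ u = Bv m n P (UE T) r X Y w p j} := by
    apply le_csInf (uset_nonempty (by omega))
    rintro b ⟨j, hj, rfl⟩
    refine le_trans (csInf_le (BddBelow.mono
      (uset_subset hQ (r := r) (X := X') (Y := Y) (w := w) h1' h3' hX' hY)
      bddBelow_Icc) ⟨j, hj, rfl⟩) (key j)
  refine le_trans hstep (le_csSup (BddAbove.mono
    (vset_subset hP (r := r) (X := X) (Y := Y) (w := w) hX hY) bddAbove_Icc)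
    ⟨p, h1, h2, h3, rfl⟩)

lemma gval_main (hP : ∀ i j, P i j ∈ Set.Icc (0 : ℝ) 1) {S : Finset (Fin m)}
    (hS : T - 1 ≤ S.card) (hSzero : ∀ s ∈ S, ∀ j, P s j = 0)
    (hTm : T ≤ m) (hTn : T ≤ n) :
    ∀ (r : ℕ) (X : Finset (Fin m)) (X' : Finset (Fin (m + 1))) (Y : Finset (Fin n)) (w : ℕ),
      (r = 0 ∨ RelC S X X') → X.card + r ≤ T → Y.card + r ≤ T →
      gval (m + 1) n (Fin.snoc P (fun _ => (0 : ℝ))) (UE T) r X' Y w ≤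
        gval m n P (UE T) r X Y w := by
  set P' : Fin (m + 1) → Fin n → ℝ := Fin.snoc P (fun _ => (0 : ℝ)) with hP'def
  have hP' := snoc_mem_Icc hP
  have hPlast : ∀ j, P' (Fin.last m) j = 0 := fun j => by
    rw [hP'def]; rw [Fin.snoc_last]
  have hPcs : ∀ i j, P' (Fin.castSucc i) j = P i j := fun i j => by
    rw [hP'def]; rw [Fin.snoc_castSucc]
  intro r
  induction r with
  | zero => intro X X' Y w _ _ _; exact le_of_eq rfl
  | succ r ih =>
    intro X X' Y w hrel hX hY
    replace hrel : RelC S X X' := hrel.resolve_left (by omega)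
    have hXcard' : X'.card = X.card := relC_card hrel
    have hXm : X.card + (r + 1) ≤ m := by omega
    have hYn : Y.card + (r + 1) ≤ n := by omega
    have hchoice : ∃ t, t ∉ X ∧ (r = 0 ∨ t ∈ S) := by
      rcases Nat.eq_zero_or_pos r with hr | hr
      · obtain ⟨t, ht⟩ := exists_notMem_fin (show X.card < m by omega)
        exact ⟨t, ht, Or.inl hr⟩
      · have h1 : S.card ≤ (S \ X).card + X.card := Finset.card_le_card_sdiff_add_card
        have h2 : 0 < (S \ X).card := by omega
        obtain ⟨t, ht⟩ := Finset.card_pos.1 h2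
        rw [Finset.mem_sdiff] at ht
        exact ⟨t, ht.2, Or.inr ht.1⟩
    obtain ⟨t, htX, htS⟩ := hchoice
    rw [gval_succ, gval_succ]
    apply csSup_le (vset_nonempty (show X'.card < m + 1 by omega))
    rintro v ⟨p', h1', h2', h3', rfl⟩
    have step : ∀ (Z : Finset (Fin m)) (Z' : Finset (Fin (m + 1))) (j : Fin n) (w' : ℕ),
        (r = 0 ∨ RelC S Z Z') → Z.card + r ≤ T →
        gval (m + 1) n P' (UE T) r Z' (insert j Y) w' ≤
          gval m n P (UE T) r Z (insert j Y) w' := by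
      intro Z Z' j w' hz hZc
      have : (insert j Y).card + r ≤ T := by
        have := Finset.card_insert_le j Y; omega
      exact ih Z Z' (insert j Y) w' hz hZc this
    have hcards : ∀ i : Fin m, (insert i X).card + r ≤ T := by
      intro i; have := Finset.card_insert_le i X; omega
    have hshift : ∀ j : Fin n,
        gval m n P (UE T) r (insert t X) (insert j Y) (w + 1) =
          gval m n P (UE T) r (insert t X) (insert j Y) w + 1 := by
      intro j
      apply gval_shift hP
      · have := Finset.card_insert_le t X; omega
      · have := Finset.card_insert_le j Y; omega
    -- the term B i for the unprimed game
    set B : Fin n → Fin m → ℝ := fun j i =>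
      P i j * gval m n P (UE T) r (insert i X) (insert j Y) (w + 1) +
        (1 - P i j) * gval m n P (UE T) r (insert i X) (insert j Y) w with hBdef
    set B' : Fin n → Fin (m + 1) → ℝ := fun j i =>
      P' i j * gval (m + 1) n P' (UE T) r (insert i X') (insert j Y) (w + 1) +
        (1 - P' i j) * gval (m + 1) n P' (UE T) r (insert i X') (insert j Y) w with hB'def
    have hB'last : ∀ j, B' j (Fin.last m) =
        gval (m + 1) n P' (UE T) r (insert (Fin.last m) X') (insert j Y) w := by
      intro j; rw [hB'def]; simp only [hPlast]; ring
    have hBv'eq : ∀ j, Bv (m + 1) n P' (UE T) r X' Y w p' j =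
        (∑ i : Fin m, p' (Fin.castSucc i) * B' j (Fin.castSucc i)) +
          p' (Fin.last m) * B' j (Fin.last m) := by
      intro j; unfold Bv; rw [Fin.sum_univ_castSucc]
    have hBt_ge : ∀ j, gval m n P (UE T) r (insert t X) (insert j Y) w ≤ B j t := by
      intro j
      rw [hBdef]
      simp only
      rw [hshift j]
      have := (hP t j).1
      nlinarith [(hP t j).1]
    rcases hrel with hX'eq | ⟨s, hsX, hsS, hX'eq⟩
    · -- Case 1 : X' = X.map castSuccEmb
      set p : Fin m → ℝ := fun i =>
        (if i = t then p' (Fin.last m) else 0) + p' (Fin.castSucc i) with hpdef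
      have h1 : ∀ i, 0 ≤ p i := by
        intro i
        have ha := h1' (Fin.castSucc i)
        have hb := h1' (Fin.last m)
        rw [hpdef]; dsimp only; split <;> linarith
      have h2 : ∀ i ∈ X, p i = 0 := by
        intro i hi
        have hcs : p' (Fin.castSucc i) = 0 := by
          apply h2'
          rw [hX'eq]
          exact Finset.mem_map_of_mem _ hi
        rw [hpdef]; dsimp only
        rw [if_neg (fun hit => htX (by rw [← hit]; exact hi)), hcs, add_zero]
      have h3 : (∑ i, p i) = 1 := by
        rw [hpdef]
        rw [Finset.sum_add_distrib, Fintype.sum_ite_eq']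
        rw [← h3', Fin.sum_univ_castSucc]
        ring
      have key : ∀ j, Bv (m + 1) n P' (UE T) r X' Y w p' j ≤
          Bv m n P (UE T) r X Y w p j := by
        intro j
        have hrhs : Bv m n P (UE T) r X Y w p j =
            (∑ i : Fin m, p' (Fin.castSucc i) * B j i) + p' (Fin.last m) * B j t := by
          unfold Bv
          rw [hpdef]
          have : ∀ i : Fin m, ((if i = t then p' (Fin.last m) else 0) +
              p' (Fin.castSucc i)) * B j i =
              p' (Fin.castSucc i) * B j i +
                (if i = t then p' (Fin.last m) * B j i else 0) := by
            intro i; split <;> ring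
          rw [Finset.sum_congr rfl fun i _ => this i, Finset.sum_add_distrib,
            Fintype.sum_ite_eq']
        rw [hrhs, hBv'eq j]
        apply add_le_add
        · apply Finset.sum_le_sum
          intro i _
          refine mul_le_mul_of_nonneg_left ?_ (h1' _)
          have hins : insert (Fin.castSucc i) X' = (insert i X).map Fin.castSuccEmb := by
            rw [hX'eq, Finset.map_insert]
            rfl
          have hrel1 : r = 0 ∨ RelC S (insert i X) (insert (Fin.castSucc i) X') :=
            Or.inr (Or.inl hins)
          have s1 := step (insert i X) (insert (Fin.castSucc i) X') j (w + 1) hrel1 (hcards i)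
          have s0 := step (insert i X) (insert (Fin.castSucc i) X') j w hrel1 (hcards i)
          rw [hBdef, hB'def]
          simp only [hPcs]
          have := (hP i j).1
          have := (hP i j).2
          nlinarith
        · rw [hB'last j]
          refine mul_le_mul_of_nonneg_left ?_ (h1' _)
          have hrel2 : r = 0 ∨ RelC S (insert t X) (insert (Fin.last m) X') := by
            rcases htS with hr0 | htS
            · exact Or.inl hr0
            · refine Or.inr (Or.inr ⟨t, Finset.mem_insert_self t X, htS, ?_⟩)
              rw [Finset.erase_insert htX, hX'eq]
          have s0 := step (insert t X) (insert (Fin.last m) X') j w hrel2 (hcards t)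
          exact s0.trans (hBt_ge j)
      exact le_sSup_tail hP' hP h1' h3' h1 h2 h3
        (by omega) (by omega) (by omega) key
    · -- Case 2 : X' = insert last ((X.erase s).map castSuccEmb)
      have hlastX' : Fin.last m ∈ X' := by rw [hX'eq]; exact Finset.mem_insert_self _ _
      have hp'last : p' (Fin.last m) = 0 := h2' _ hlastX'
      have htNes : t ≠ s := fun h => htX (h ▸ hsX)
      set p : Fin m → ℝ := fun i =>
        (if i = t then p' (Fin.castSucc s) else 0) +
          (if i = s then 0 else p' (Fin.castSucc i)) with hpdef
      have h1 : ∀ i, 0 ≤ p i := by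
        intro i
        have ha := h1' (Fin.castSucc i)
        have hb := h1' (Fin.castSucc s)
        rw [hpdef]; dsimp only; split <;> split <;> linarith
      have h2 : ∀ i ∈ X, p i = 0 := by
        intro i hi
        rw [hpdef]; dsimp only
        rw [if_neg (fun hit => htX (by rw [← hit]; exact hi))]
        by_cases his : i = s
        · rw [if_pos his]; ring
        · rw [if_neg his]
          have : p' (Fin.castSucc i) = 0 := by
            apply h2'
            rw [hX'eq]
            exact Finset.mem_insert_of_mem
              (Finset.mem_map_of_mem _ (Finset.mem_erase.2 ⟨his, hi⟩))
          rw [this]; ring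
      have hsumcs : (∑ i : Fin m, p' (Fin.castSucc i)) = 1 := by
        rw [← h3', Fin.sum_univ_castSucc, hp'last, add_zero]
      have h3 : (∑ i, p i) = 1 := by
        rw [hpdef]
        rw [Finset.sum_add_distrib, Fintype.sum_ite_eq']
        have : ∀ i : Fin m, (if i = s then (0:ℝ) else p' (Fin.castSucc i)) =
            p' (Fin.castSucc i) - (if i = s then p' (Fin.castSucc s) else 0) := by
          intro i; by_cases h : i = s <;> simp [h]
        rw [Finset.sum_congr rfl fun i _ => this i, Finset.sum_sub_distrib,
          Fintype.sum_ite_eq', hsumcs]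
        ring
      have key : ∀ j, Bv (m + 1) n P' (UE T) r X' Y w p' j ≤
          Bv m n P (UE T) r X Y w p j := by
        intro j
        have hlhs : Bv (m + 1) n P' (UE T) r X' Y w p' j =
            (∑ i : Fin m, (if i = s then 0 else p' (Fin.castSucc i)) * B' j (Fin.castSucc i))
              + p' (Fin.castSucc s) * B' j (Fin.castSucc s) := by
          rw [hBv'eq j, hp'last, zero_mul, add_zero]
          have : ∀ i : Fin m, p' (Fin.castSucc i) * B' j (Fin.castSucc i) =
              (if i = s then 0 else p' (Fin.castSucc i)) * B' j (Fin.castSucc i) +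
                (if i = s then p' (Fin.castSucc s) * B' j (Fin.castSucc s) else 0) := by
            intro i; by_cases h : i = s
            · subst h; simp
            · simp [h]
          rw [Finset.sum_congr rfl fun i _ => this i, Finset.sum_add_distrib,
            Fintype.sum_ite_eq']
        have hrhs : Bv m n P (UE T) r X Y w p j =
            (∑ i : Fin m, (if i = s then 0 else p' (Fin.castSucc i)) * B j i) +
              p' (Fin.castSucc s) * B j t := by
          unfold Bv
          rw [hpdef]
          have : ∀ i : Fin m, ((if i = t then p' (Fin.castSucc s) else 0) +
              (if i = s then 0 else p' (Fin.castSucc i))) * B j i =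
              (if i = s then 0 else p' (Fin.castSucc i)) * B j i +
                (if i = t then p' (Fin.castSucc s) * B j i else 0) := by
            intro i; split <;> split <;> ring
          rw [Finset.sum_congr rfl fun i _ => this i, Finset.sum_add_distrib,
            Fintype.sum_ite_eq']
        rw [hlhs, hrhs]
        apply add_le_add
        · apply Finset.sum_le_sum
          intro i _
          by_cases his : i = s
          · simp [his]
          · rw [if_neg his]
            refine mul_le_mul_of_nonneg_left ?_ (h1' _)
            have hins : insert (Fin.castSucc i) X' =
                insert (Fin.last m) (((insert i X).erase s).map Fin.castSuccEmb) := by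
              rw [Finset.erase_insert_of_ne his, Finset.map_insert, hX'eq,
                Finset.insert_comm]
              rfl
            have hrel1 : r = 0 ∨ RelC S (insert i X) (insert (Fin.castSucc i) X') :=
              Or.inr (Or.inr ⟨s, Finset.mem_insert_of_mem hsX, hsS, hins⟩)
            have s1 := step (insert i X) (insert (Fin.castSucc i) X') j (w + 1) hrel1 (hcards i)
            have s0 := step (insert i X) (insert (Fin.castSucc i) X') j w hrel1 (hcards i)
            rw [hBdef, hB'def]
            simp only [hPcs]
            have := (hP i j).1
            have := (hP i j).2
            nlinarith
        · refine mul_le_mul_of_nonneg_left ?_ (h1' _)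
          have hB's : B' j (Fin.castSucc s) =
              gval (m + 1) n P' (UE T) r (insert (Fin.castSucc s) X') (insert j Y) w := by
            rw [hB'def]
            simp only [hPcs, hSzero s hsS j]
            ring
          rw [hB's]
          have hins2 : insert ((Fin.castSuccEmb : Fin m ↪ Fin (m + 1)) s) X' =
              insert (Fin.last m) (((insert t X).erase t).map Fin.castSuccEmb) := by
            rw [Finset.erase_insert htX, hX'eq, Finset.insert_comm, ← Finset.map_insert,
              Finset.insert_erase hsX]
          have hrel2 : r = 0 ∨ RelC S (insert t X) (insert (Fin.castSucc s) X') := by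
            rcases htS with hr0 | htS
            · exact Or.inl hr0
            · exact Or.inr (Or.inr ⟨t, Finset.mem_insert_self t X, htS, hins2⟩)
          have s0 := step (insert t X) (insert (Fin.castSucc s) X') j w hrel2 (hcards t)
          exact s0.trans (hBt_ge j)
      exact le_sSup_tail hP' hP h1' h3' h1 h2 h3
        (by omega) (by omega) (by omega) key
end


/-- Under `U_E`, if Team 1 already has at least `T - 1` dominated
players (all-zero rows of `P`), then appending one more all-zero row to `P` does not
change the value of the game: a `T`-th dominated player gives no advantage over
`T - 1` of them. -/
theorem no_gain_from_Tth_dominated_UE (T m n : ℕ) (hT : 1 ≤ T) (hm : T ≤ m) (hn : T ≤ n)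
    (P : Fin m → Fin n → ℝ) (hP : ∀ i j, P i j ∈ Set.Icc (0 : ℝ) 1)
    (hzero : ∃ S : Finset (Fin m), T - 1 ≤ S.card ∧ ∀ i ∈ S, ∀ j, P i j = 0) :
    gval (m + 1) n (Fin.snoc P (fun _ => (0 : ℝ))) (UE T) T ∅ ∅ 0 =
      gval m n P (UE T) T ∅ ∅ 0 := by
  obtain ⟨S, hS, hSzero⟩ := hzero
  apply le_antisymm
  · exact gval_main hP hS hSzero hm hn T ∅ ∅ ∅ 0
      (Or.inr (Or.inl (by simp))) (by simpa using hm) (by simpa using hn)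
  · have h := gval_embed (T := T) hP T ∅ ∅ 0 (by simpa using hm) (by simpa using hn)
    simpa using h
end
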